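/- arXiv:1010.5869 — 2 statements merged into one kernel-verified Lean document; each statement's English description precedes it below -/
import Mathlib

section
/- Fix κ ∈ (0,1) and α ≥ 0. Let φ : ℝ → [0,α] be a C² nondecreasing function vanishing on ℝ⁻ and equal to α on [1,∞). For ε > 0 define v_ε(s) = ln s + φ(ε ln ln s) ln ln s on [e,∞). Then as ε → 0, the quantity (2v_ε'(s) + s v_ε''(s)) / (s² v_ε'(s)³) converges to 1 uniformly in s ∈ [e,∞). -/
open Real Filter

lemma mono_deriv_nonneg' {f : ℝ → ℝ} (hf : Monotone f) (x : ℝ) : 0 ≤ deriv f x := by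
  by_cases hd : DifferentiableAt ℝ f x
  · have h2 := hasDerivAt_iff_tendsto_slope.mp hd.hasDerivAt
    have h3 : Filter.Tendsto (slope f x) (nhdsWithin x (Set.Ioi x)) (nhds (deriv f x)) :=
      h2.mono_left (nhdsWithin_mono x (fun y hy => ne_of_gt hy))
    refine ge_of_tendsto h3 ?_
    filter_upwards [self_mem_nhdsWithin] with y (hy : x < y)
    rw [slope_def_field, div_eq_mul_inv]
    exact mul_nonneg (sub_nonneg.2 (hf hy.le)) (inv_nonneg.2 (sub_nonneg.2 hy.le))
  · rw [deriv_zero_of_not_differentiableAt hd]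



noncomputable def Gf (φ : ℝ → ℝ) (ε t : ℝ) : ℝ :=
  φ (ε * Real.log (Real.log t)) +
    (ε * Real.log (Real.log t)) * deriv φ (ε * Real.log (Real.log t))

noncomputable def Ff (φ : ℝ → ℝ) (ε t : ℝ) : ℝ := 1 + Gf φ ε t / Real.log t
noncomputable def Wf (φ : ℝ → ℝ) (ε t : ℝ) : ℝ :=
  (2 * ε * deriv φ (ε * Real.log (Real.log t)) +
    ε ^ 2 * Real.log (Real.log t) * deriv (deriv φ) (ε * Real.log (Real.log t)) -
    Gf φ ε t) / Real.log t ^ 2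

noncomputable def f1 (φ : ℝ → ℝ) (ε t : ℝ) : ℝ := (1 + Gf φ ε t / Real.log t) / t

noncomputable def Gd (φ : ℝ → ℝ) (ε t : ℝ) : ℝ :=
  (2 * ε * deriv φ (ε * Real.log (Real.log t)) +
    ε ^ 2 * Real.log (Real.log t) * deriv (deriv φ) (ε * Real.log (Real.log t))) /
    (t * Real.log t)

noncomputable def f2 (φ : ℝ → ℝ) (ε t : ℝ) : ℝ :=
  (Gd φ ε t / Real.log t - Gf φ ε t / (t * Real.log t ^ 2)) / t
    - (1 + Gf φ ε t / Real.log t) / t ^ 2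

lemma hasDerivAt_v (φ : ℝ → ℝ) (hφd : Differentiable ℝ φ) (ε : ℝ) {t : ℝ} (ht : 1 < t) :
    HasDerivAt (fun t => Real.log t + φ (ε * Real.log (Real.log t)) * Real.log (Real.log t))
      (f1 φ ε t) t := by
  have ht0 : (0:ℝ) < t := lt_trans one_pos ht
  have htne : t ≠ 0 := ne_of_gt ht0
  have hL : 0 < Real.log t := Real.log_pos ht
  have hLne : Real.log t ≠ 0 := ne_of_gt hL
  have hlog : HasDerivAt Real.log t⁻¹ t := Real.hasDerivAt_log htne
  have hM : HasDerivAt (fun t => Real.log (Real.log t)) ((Real.log t)⁻¹ * t⁻¹) t :=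
    (Real.hasDerivAt_log hLne).comp t hlog
  have hu : HasDerivAt (fun t => ε * Real.log (Real.log t)) (ε * ((Real.log t)⁻¹ * t⁻¹)) t :=
    hM.const_mul ε
  have hφu : HasDerivAt (fun t => φ (ε * Real.log (Real.log t)))
      (deriv φ (ε * Real.log (Real.log t)) * (ε * ((Real.log t)⁻¹ * t⁻¹))) t :=
    (hφd _).hasDerivAt.comp t hu
  have h := hlog.add (hφu.mul hM)
  refine h.congr_deriv ?_
  unfold f1 Gf
  field_simp
  ring

lemma hasDerivAt_f1 (φ : ℝ → ℝ) (hφd : Differentiable ℝ φ) (hψd : Differentiable ℝ (deriv φ))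
    (ε : ℝ) {t : ℝ} (ht : 1 < t) : HasDerivAt (f1 φ ε) (f2 φ ε t) t := by
  have ht0 : (0:ℝ) < t := lt_trans one_pos ht
  have htne : t ≠ 0 := ne_of_gt ht0
  have hL : 0 < Real.log t := Real.log_pos ht
  have hLne : Real.log t ≠ 0 := ne_of_gt hL
  have hlog : HasDerivAt Real.log t⁻¹ t := Real.hasDerivAt_log htne
  have hM : HasDerivAt (fun t => Real.log (Real.log t)) ((Real.log t)⁻¹ * t⁻¹) t :=
    (Real.hasDerivAt_log hLne).comp t hlog
  have hu : HasDerivAt (fun t => ε * Real.log (Real.log t)) (ε * ((Real.log t)⁻¹ * t⁻¹)) t :=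
    hM.const_mul ε
  have hφu : HasDerivAt (fun t => φ (ε * Real.log (Real.log t)))
      (deriv φ (ε * Real.log (Real.log t)) * (ε * ((Real.log t)⁻¹ * t⁻¹))) t :=
    (hφd _).hasDerivAt.comp t hu
  have hψu : HasDerivAt (fun t => deriv φ (ε * Real.log (Real.log t)))
      (deriv (deriv φ) (ε * Real.log (Real.log t)) * (ε * ((Real.log t)⁻¹ * t⁻¹))) t :=
    (hψd _).hasDerivAt.comp t hu
  have hG : HasDerivAt (Gf φ ε) (Gd φ ε t) t := by
    have h := hφu.add (hu.mul hψu)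
    refine h.congr_deriv ?_
    unfold Gd
    field_simp
    ring
  have hinner : HasDerivAt (fun t => 1 + Gf φ ε t / Real.log t)
      ((Gd φ ε t * Real.log t - Gf φ ε t * t⁻¹) / Real.log t ^ 2) t :=
    (hG.div hlog hLne).const_add 1
  have h := hinner.div (hasDerivAt_id t) htne
  refine h.congr_deriv ?_
  unfold f2
  simp only [id]
  field_simp

lemma num_eq (φ : ℝ → ℝ) (ε : ℝ) {s : ℝ} (hs : s ≠ 0) (hL : Real.log s ≠ 0) :
    2 * f1 φ ε s + s * f2 φ ε s = (Ff φ ε s + Wf φ ε s) / s := by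
  unfold f1 f2 Gd Ff Wf
  field_simp
  ring

lemma den_eq (φ : ℝ → ℝ) (ε : ℝ) {s : ℝ} (hs : s ≠ 0) :
    s ^ 2 * f1 φ ε s ^ 3 = Ff φ ε s ^ 3 / s := by
  unfold f1 Ff
  field_simp

lemma ratio_eq (φ : ℝ → ℝ) (ε : ℝ) {s : ℝ} (hs : s ≠ 0) (hL : Real.log s ≠ 0) :
    (2 * f1 φ ε s + s * f2 φ ε s) / (s ^ 2 * f1 φ ε s ^ 3)
      = (Ff φ ε s + Wf φ ε s) / Ff φ ε s ^ 3 := by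
  rw [num_eq φ ε hs hL, den_eq φ ε hs, div_div_div_comm, div_self hs, div_one]


lemma final_est (F W δ θ : ℝ) (hθ0 : 0 < θ) (hθhalf : θ ≤ 1/2) (hθδ : θ ≤ δ/18)
    (hF1 : 1 ≤ F) (hF2 : F ≤ 1 + 2*θ) (hW : |W| ≤ 5*θ) :
    |(F + W)/F^3 - 1| < δ := by
  have hF30 : (0:ℝ) < F^3 := by positivity
  have hF31 : (1:ℝ) ≤ F^3 := by
    calc (1:ℝ) = 1^3 := by norm_num
    _ ≤ F^3 := pow_le_pow_left₀ (by norm_num) hF1 3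
  have hFF3 : F ≤ F^3 := by
    nlinarith [mul_nonneg (mul_nonneg (by linarith : (0:ℝ) ≤ F) (by linarith : (0:ℝ) ≤ F - 1))
      (by linarith : (0:ℝ) ≤ F + 1)]
  have habs : (0:ℝ) ≤ F^3 - F := by linarith
  have hstep : |(F + W)/F^3 - 1| ≤ |W| + (F^3 - F) := by
    have h1 : (F + W)/F^3 - 1 = (W - (F^3 - F))/F^3 := by field_simp; ring
    rw [h1, abs_div, abs_of_pos hF30]
    have h2 : |W - (F^3 - F)| ≤ |W| + (F^3 - F) := by
      calc |W - (F^3 - F)| ≤ |W| + |F^3 - F| := abs_sub _ _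
      _ = |W| + (F^3 - F) := by rw [abs_of_nonneg habs]
    calc |W - (F^3 - F)|/F^3 ≤ |W - (F^3 - F)| := by
          rw [div_le_iff₀ hF30]; nlinarith [abs_nonneg (W - (F^3 - F))]
    _ ≤ |W| + (F^3 - F) := h2
  have hF2' : F ≤ 2 := by linarith
  have h6 : F*(F+1) ≤ 6 := by nlinarith
  have hcube : F^3 - F ≤ 12*θ := by
    have he : F^3 - F = (F*(F+1))*(F-1) := by ring
    rw [he]
    calc (F*(F+1))*(F-1) ≤ 6*(2*θ) :=
          mul_le_mul h6 (by linarith) (by linarith) (by norm_num)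
    _ = 12*θ := by ring
  calc |(F + W)/F^3 - 1| ≤ |W| + (F^3 - F) := hstep
  _ ≤ 5*θ + 12*θ := by linarith
  _ < δ := by linarith

set_option maxHeartbeats 2000000 in
lemma bounds_lemma (α : ℝ) (hα : 0 ≤ α) (φ : ℝ → ℝ) (hφmono : Monotone φ)
    (hφrange : ∀ x, φ x ∈ Set.Icc 0 α)
    (hψ1 : ∀ x : ℝ, 1 < x → deriv φ x = 0)
    (θ r Z K1 K2 ε s : ℝ)
    (hθ0 : 0 < θ) (hr0 : 0 < r) (hφr : φ r ≤ θ)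
    (hZ1 : 1 ≤ Z) (hZlog : Real.log (α/θ + 1) ≤ Z)
    (hK1 : ∀ x ∈ Set.Icc (0:ℝ) 1, |deriv φ x| ≤ K1)
    (hK10 : 0 ≤ K1)
    (hε : 0 < ε) (hεZ : ε * Z ≤ r) (hεK1 : ε * K1 ≤ θ)
    (hs : Real.exp 1 ≤ s) :
    1 ≤ Ff φ ε s ∧ Ff φ ε s ≤ 1 + 2*θ := by
  have hs0 : (0:ℝ) < s := lt_of_lt_of_le (Real.exp_pos 1) hs
  obtain ⟨L, hLdef⟩ : ∃ x : ℝ, Real.log s = x := ⟨_, rfl⟩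
  have hL1 : 1 ≤ L := hLdef ▸ (Real.le_log_iff_exp_le hs0).mpr hs
  have hL0 : (0:ℝ) < L := lt_of_lt_of_le one_pos hL1
  obtain ⟨M, hMdef⟩ : ∃ x : ℝ, Real.log L = x := ⟨_, rfl⟩
  have hM0 : 0 ≤ M := hMdef ▸ Real.log_nonneg hL1
  have hML : M ≤ L := by
    have := Real.log_le_sub_one_of_pos hL0
    rw [hMdef] at this; linarith
  obtain ⟨u, hudef⟩ : ∃ x : ℝ, ε * M = x := ⟨_, rfl⟩
  have hu0 : 0 ≤ u := hudef ▸ mul_nonneg hε.le hM0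
  obtain ⟨p, hpdef⟩ : ∃ x : ℝ, φ u = x := ⟨_, rfl⟩
  obtain ⟨q, hqdef⟩ : ∃ x : ℝ, deriv φ u = x := ⟨_, rfl⟩
  have hp0 : 0 ≤ p := hpdef ▸ (hφrange u).1
  have hpα : p ≤ α := hpdef ▸ (hφrange u).2
  have hq0 : 0 ≤ q := hqdef ▸ mono_deriv_nonneg' hφmono u
  have hFe : Ff φ ε s = 1 + (p + u*q)/L := by
    unfold Ff Gf
    rw [hLdef, hMdef, hudef, hpdef, hqdef]
  have hqK1 : q ≤ K1 := by
    rcases le_or_gt u 1 with h | h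
    · linarith [(abs_le.mp (hqdef ▸ hK1 u ⟨hu0, h⟩)).2]
    · rw [← hqdef, hψ1 u h]; exact hK10
  have hpθL : p ≤ θ * L := by
    rcases le_or_gt u r with h | h
    · have h2 : p ≤ θ := le_trans (hpdef ▸ hφmono h) hφr
      nlinarith [mul_nonneg hθ0.le (by linarith : (0:ℝ) ≤ L - 1)]
    · have hZr : Z ≤ r / ε := by
        rw [le_div_iff₀ hε]; linarith [hεZ]
      have hMre : r / ε < M := by
        rw [div_lt_iff₀ hε]
        calc r < u := h
        _ = M * ε := by rw [← hudef]; ring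
      have hexpM : Real.exp M = L := by rw [← hMdef]; exact Real.exp_log hL0
      have hLZ : Real.exp Z ≤ L := by
        rw [← hexpM]
        exact Real.exp_le_exp.mpr (le_of_lt (lt_of_le_of_lt hZr hMre))
      have hLb : α/θ + 1 ≤ L := by
        refine le_trans ?_ hLZ
        calc α/θ + 1 = Real.exp (Real.log (α/θ + 1)) := (Real.exp_log (by positivity)).symm
        _ ≤ Real.exp Z := Real.exp_le_exp.mpr hZlog
      have hθL : θ * (α/θ + 1) = α + θ := by field_simp
      have hm := mul_le_mul_of_nonneg_left hLb hθ0.le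
      linarith
  have huqθL : u * q ≤ θ * L := by
    have h1 : u * q ≤ u * K1 := mul_le_mul_of_nonneg_left hqK1 hu0
    have h2 : u * K1 = ε * K1 * M := by rw [← hudef]; ring
    have h3 : ε * K1 * M ≤ θ * M := mul_le_mul_of_nonneg_right hεK1 hM0
    have h4 : θ * M ≤ θ * L := mul_le_mul_of_nonneg_left hML hθ0.le
    linarith
  constructor
  · rw [hFe]
    have : 0 ≤ (p + u*q)/L := div_nonneg (by nlinarith [mul_nonneg hu0 hq0]) hL0.le
    linarith
  · rw [hFe]
    have h1 : (p + u*q)/L ≤ 2*θ := by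
      rw [div_le_iff₀ hL0]; linarith
    linarith

set_option maxHeartbeats 2000000 in
lemma W_bound (α : ℝ) (hα : 0 ≤ α) (φ : ℝ → ℝ) (hφmono : Monotone φ)
    (hφrange : ∀ x, φ x ∈ Set.Icc 0 α)
    (hψ1 : ∀ x : ℝ, 1 < x → deriv φ x = 0)
    (hψ21 : ∀ x : ℝ, 1 < x → deriv (deriv φ) x = 0)
    (θ r Z K1 K2 ε s : ℝ)
    (hθ0 : 0 < θ) (hr0 : 0 < r) (hφr : φ r ≤ θ)
    (hZ1 : 1 ≤ Z) (hZlog : Real.log (α/θ + 1) ≤ Z)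
    (hK1 : ∀ x ∈ Set.Icc (0:ℝ) 1, |deriv φ x| ≤ K1)
    (hK2 : ∀ x ∈ Set.Icc (0:ℝ) 1, |deriv (deriv φ) x| ≤ K2)
    (hK10 : 0 ≤ K1) (hK20 : 0 ≤ K2)
    (hε : 0 < ε) (hεZ : ε * Z ≤ r) (hεK1 : ε * K1 ≤ θ) (hεK2 : ε * K2 ≤ θ)
    (hs : Real.exp 1 ≤ s) :
    |Wf φ ε s| ≤ 5*θ := by
  have hs0 : (0:ℝ) < s := lt_of_lt_of_le (Real.exp_pos 1) hs
  obtain ⟨L, hLdef⟩ : ∃ x : ℝ, Real.log s = x := ⟨_, rfl⟩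
  have hL1 : 1 ≤ L := hLdef ▸ (Real.le_log_iff_exp_le hs0).mpr hs
  have hL0 : (0:ℝ) < L := lt_of_lt_of_le one_pos hL1
  obtain ⟨M, hMdef⟩ : ∃ x : ℝ, Real.log L = x := ⟨_, rfl⟩
  have hM0 : 0 ≤ M := hMdef ▸ Real.log_nonneg hL1
  have hML : M ≤ L := by
    have := Real.log_le_sub_one_of_pos hL0
    rw [hMdef] at this; linarith
  obtain ⟨u, hudef⟩ : ∃ x : ℝ, ε * M = x := ⟨_, rfl⟩
  have hu0 : 0 ≤ u := hudef ▸ mul_nonneg hε.le hM0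
  obtain ⟨p, hpdef⟩ : ∃ x : ℝ, φ u = x := ⟨_, rfl⟩
  obtain ⟨q, hqdef⟩ : ∃ x : ℝ, deriv φ u = x := ⟨_, rfl⟩
  obtain ⟨w, hwdef⟩ : ∃ x : ℝ, deriv (deriv φ) u = x := ⟨_, rfl⟩
  have hp0 : 0 ≤ p := hpdef ▸ (hφrange u).1
  have hpα : p ≤ α := hpdef ▸ (hφrange u).2
  have hq0 : 0 ≤ q := hqdef ▸ mono_deriv_nonneg' hφmono u
  have hWe : Wf φ ε s = (2*ε*q + ε^2*M*w - (p + u*q))/L^2 := by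
    unfold Wf Gf
    rw [hLdef, hMdef, hudef, hpdef, hqdef, hwdef]
  have hqK1 : q ≤ K1 := by
    rcases le_or_gt u 1 with h | h
    · linarith [(abs_le.mp (hqdef ▸ hK1 u ⟨hu0, h⟩)).2]
    · rw [← hqdef, hψ1 u h]; exact hK10
  have hpθL : p ≤ θ * L := by
    rcases le_or_gt u r with h | h
    · have h2 : p ≤ θ := le_trans (hpdef ▸ hφmono h) hφr
      nlinarith [mul_nonneg hθ0.le (by linarith : (0:ℝ) ≤ L - 1)]
    · have hZr : Z ≤ r / ε := by
        rw [le_div_iff₀ hε]; linarith [hεZ]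
      have hMre : r / ε < M := by
        rw [div_lt_iff₀ hε]
        calc r < u := h
        _ = M * ε := by rw [← hudef]; ring
      have hexpM : Real.exp M = L := by rw [← hMdef]; exact Real.exp_log hL0
      have hLZ : Real.exp Z ≤ L := by
        rw [← hexpM]
        exact Real.exp_le_exp.mpr (le_of_lt (lt_of_le_of_lt hZr hMre))
      have hLb : α/θ + 1 ≤ L := by
        refine le_trans ?_ hLZ
        calc α/θ + 1 = Real.exp (Real.log (α/θ + 1)) := (Real.exp_log (by positivity)).symm
        _ ≤ Real.exp Z := Real.exp_le_exp.mpr hZlog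
      have hθL : θ * (α/θ + 1) = α + θ := by field_simp
      have hm := mul_le_mul_of_nonneg_left hLb hθ0.le
      linarith
  have huqθL : u * q ≤ θ * L := by
    have h1 : u * q ≤ u * K1 := mul_le_mul_of_nonneg_left hqK1 hu0
    have h2 : u * K1 = ε * K1 * M := by rw [← hudef]; ring
    have h3 : ε * K1 * M ≤ θ * M := mul_le_mul_of_nonneg_right hεK1 hM0
    have h4 : θ * M ≤ θ * L := mul_le_mul_of_nonneg_left hML hθ0.le
    linarith
  have hεq : ε * q ≤ θ := by
    rcases le_or_gt u 1 with h | h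
    · have h1 : ε * q ≤ ε * K1 := mul_le_mul_of_nonneg_left hqK1 hε.le
      linarith
    · rw [← hqdef, hψ1 u h]; simpa using hθ0.le
  have huw : u * |w| ≤ K2 := by
    rcases le_or_gt u 1 with h | h
    · have h1 := hK2 u ⟨hu0, h⟩
      calc u * |w| ≤ 1 * K2 := mul_le_mul h (by rw [← hwdef]; exact h1) (abs_nonneg _) one_pos.le
      _ = K2 := one_mul _
    · rw [← hwdef, hψ21 u h]; simpa using hK20
  have hnum : |2*ε*q + ε^2*M*w - (p + u*q)| ≤ 5*θ*L := by
    have h1 : |2*ε*q| ≤ 2*θ := by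
      rw [abs_of_nonneg (by positivity)]; linarith
    have h2 : |ε^2*M*w| ≤ θ := by
      have he : |ε^2*M*w| = ε * (u * |w|) := by
        rw [abs_mul, abs_of_nonneg (by positivity : (0:ℝ) ≤ ε^2*M), ← hudef]; ring
      rw [he]
      calc ε * (u * |w|) ≤ ε * K2 := mul_le_mul_of_nonneg_left huw hε.le
      _ ≤ θ := hεK2
    have h3 : |p + u*q| ≤ 2*θ*L := by
      rw [abs_of_nonneg (by nlinarith [mul_nonneg hu0 hq0])]; linarith
    calc |2*ε*q + ε^2*M*w - (p + u*q)|
        = |(2*ε*q + ε^2*M*w) + (-(p + u*q))| := by ring_nf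
      _ ≤ |2*ε*q + ε^2*M*w| + |(-(p + u*q))| := abs_add_le _ _
      _ = |2*ε*q + ε^2*M*w| + |p + u*q| := by rw [abs_neg]
      _ ≤ (|2*ε*q| + |ε^2*M*w|) + |p + u*q| := by linarith [abs_add_le (2*ε*q) (ε^2*M*w)]
      _ ≤ 2*θ + θ + 2*θ*L := by linarith
      _ ≤ 5*θ*L := by nlinarith [mul_nonneg hθ0.le (by linarith : (0:ℝ) ≤ L - 1)]
  rw [hWe, abs_div, abs_of_pos (by positivity : (0:ℝ) < L^2)]
  rw [div_le_iff₀ (by positivity : (0:ℝ) < L^2)]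
  calc |2*ε*q + ε^2*M*w - (p + u*q)| ≤ 5*θ*L := hnum
  _ ≤ 5*θ*L^2 := by nlinarith [mul_nonneg (mul_nonneg hθ0.le hL0.le) (by linarith : (0:ℝ) ≤ L - 1)]


set_option maxHeartbeats 2000000 in
/-- With `φ : ℝ → [0,α]` a C² nondecreasing function vanishing on `ℝ⁻` and equal
to `α` on `[1,∞)`, and `v_ε(s) = ln s + φ(ε ln ln s) ln ln s`, the quantity
`(2v_ε'(s) + s v_ε''(s))/(s² v_ε'(s)³)` converges to `1` as `ε → 0`,
uniformly in `s ∈ [e, ∞)`. -/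
theorem stmt_7 (α : ℝ) (hα : 0 ≤ α) (φ : ℝ → ℝ)
    (hφC2 : ContDiff ℝ 2 φ) (hφmono : Monotone φ)
    (hφrange : ∀ x, φ x ∈ Set.Icc 0 α)
    (hφ0 : ∀ x ≤ (0 : ℝ), φ x = 0) (hφ1 : ∀ x ≥ (1 : ℝ), φ x = α) :
    ∀ δ > (0 : ℝ), ∃ ε₀ > (0 : ℝ), ∀ ε : ℝ, 0 < ε → ε ≤ ε₀ →
      ∀ s : ℝ, Real.exp 1 ≤ s →
        |(2 * deriv (fun t => Real.log t + φ (ε * Real.log (Real.log t)) * Real.log (Real.log t)) s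
            + s * deriv (deriv (fun t => Real.log t + φ (ε * Real.log (Real.log t)) * Real.log (Real.log t))) s)
          / (s ^ 2 * deriv (fun t => Real.log t + φ (ε * Real.log (Real.log t)) * Real.log (Real.log t)) s ^ 3)
          - 1| < δ := by
  intro δ hδ
  have hφd : Differentiable ℝ φ := hφC2.differentiable (by norm_num)
  have hψC1 : ContDiff ℝ 1 (deriv φ) := by
    have := (contDiff_succ_iff_deriv (n := 1)).mp (by exact_mod_cast hφC2)
    exact this.2.2
  have hψd : Differentiable ℝ (deriv φ) := hψC1.differentiable (by norm_num)
  have hψc : Continuous (deriv φ) := hψd.continuous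
  have hψ2c : Continuous (deriv (deriv φ)) := hψC1.continuous_deriv le_rfl
  have hψ1 : ∀ x : ℝ, 1 < x → deriv φ x = 0 := by
    intro x hx
    have hev : φ =ᶠ[nhds x] (fun _ => α) := by
      filter_upwards [Ioi_mem_nhds hx] with y (hy : 1 < y) using hφ1 y hy.le
    rw [hev.deriv_eq, deriv_const]
  have hψ21 : ∀ x : ℝ, 1 < x → deriv (deriv φ) x = 0 := by
    intro x hx
    have hev : deriv φ =ᶠ[nhds x] (fun _ => 0) := by
      filter_upwards [Ioi_mem_nhds hx] with y (hy : 1 < y) using hψ1 y hy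
    rw [hev.deriv_eq, deriv_const]
  obtain ⟨K1, hK1⟩ := (isCompact_Icc (a := (0:ℝ)) (b := 1)).exists_bound_of_continuousOn
    hψc.continuousOn
  obtain ⟨K2, hK2⟩ := (isCompact_Icc (a := (0:ℝ)) (b := 1)).exists_bound_of_continuousOn
    hψ2c.continuousOn
  simp only [Real.norm_eq_abs] at hK1 hK2
  have hK10 : 0 ≤ K1 := le_trans (abs_nonneg _) (hK1 0 (by norm_num))
  have hK20 : 0 ≤ K2 := le_trans (abs_nonneg _) (hK2 0 (by norm_num))
  set θ : ℝ := min (δ/18) (1/2) with hθdef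
  have hθ0 : 0 < θ := lt_min (by positivity) (by norm_num)
  have hθhalf : θ ≤ 1/2 := min_le_right _ _
  have hθδ : θ ≤ δ/18 := min_le_left _ _
  obtain ⟨r, hr0, hr1, hφr⟩ : ∃ r > (0:ℝ), r ≤ 1 ∧ φ r ≤ θ := by
    obtain ⟨d, hd, hdd⟩ := Metric.continuousAt_iff.mp (hφC2.continuous.continuousAt (x := 0)) θ hθ0
    refine ⟨min (d/2) 1, by positivity, min_le_right _ _, ?_⟩
    have h1 : dist (min (d/2) 1) 0 < d := by
      rw [Real.dist_eq, sub_zero, abs_of_pos (by positivity)]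
      calc min (d/2) 1 ≤ d/2 := min_le_left _ _
      _ < d := by linarith
    have h2 := hdd h1
    rw [Real.dist_eq, hφ0 0 le_rfl, sub_zero] at h2
    exact le_of_lt ((le_abs_self _).trans_lt h2)
  set Z : ℝ := max 1 (Real.log (α/θ + 1)) with hZdef
  have hZ1 : 1 ≤ Z := le_max_left _ _
  have hZ0 : 0 < Z := lt_of_lt_of_le one_pos hZ1
  have hZlog : Real.log (α/θ + 1) ≤ Z := le_max_right _ _
  set K : ℝ := K1 + K2 + 1 with hKdef
  have hK0 : 0 < K := by positivity
  refine ⟨min (r/Z) (θ/K), lt_min (by positivity) (by positivity), ?_⟩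
  intro ε hε hεle s hs
  have hs1 : (1:ℝ) < s := by
    have h2 : (2:ℝ) ≤ Real.exp 1 := by
      have := Real.add_one_le_exp 1
      linarith
    linarith
  have hs0 : (0:ℝ) < s := lt_trans one_pos hs1
  have hsne : s ≠ 0 := ne_of_gt hs0
  have hLpos : 0 < Real.log s := Real.log_pos hs1
  have hLne : Real.log s ≠ 0 := ne_of_gt hLpos
  have hεr : ε ≤ r/Z := le_trans hεle (min_le_left _ _)
  have hεθK : ε ≤ θ/K := le_trans hεle (min_le_right _ _)
  have hεZ : ε * Z ≤ r := by
    rw [← le_div_iff₀ hZ0]; exact hεr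
  have hθKK : (θ/K) * K = θ := div_mul_cancel₀ θ (ne_of_gt hK0)
  have hεK1 : ε * K1 ≤ θ := by
    have h1 : ε * K1 ≤ (θ/K) * K1 := mul_le_mul_of_nonneg_right hεθK hK10
    have h2 : (θ/K) * K1 ≤ (θ/K) * K := by
      apply mul_le_mul_of_nonneg_left _ (by positivity)
      rw [hKdef]; linarith
    linarith
  have hεK2 : ε * K2 ≤ θ := by
    have h1 : ε * K2 ≤ (θ/K) * K2 := mul_le_mul_of_nonneg_right hεθK hK20
    have h2 : (θ/K) * K2 ≤ (θ/K) * K := by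
      apply mul_le_mul_of_nonneg_left _ (by positivity)
      rw [hKdef]; linarith
    linarith
  have e1 : deriv (fun t => Real.log t + φ (ε * Real.log (Real.log t)) * Real.log (Real.log t)) s
      = f1 φ ε s := (hasDerivAt_v φ hφd ε hs1).deriv
  have e2 : deriv (deriv (fun t => Real.log t + φ (ε * Real.log (Real.log t)) * Real.log (Real.log t))) s
      = f2 φ ε s := by
    have hev : deriv (fun t => Real.log t + φ (ε * Real.log (Real.log t)) * Real.log (Real.log t))
        =ᶠ[nhds s] f1 φ ε := by
      filter_upwards [Ioi_mem_nhds hs1] with t (ht : 1 < t) using (hasDerivAt_v φ hφd ε ht).deriv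
    rw [hev.deriv_eq]
    exact (hasDerivAt_f1 φ hφd hψd ε hs1).deriv
  rw [e1, e2, ratio_eq φ ε hsne hLne]
  obtain ⟨hF1, hF2⟩ := bounds_lemma α hα φ hφmono hφrange hψ1 θ r Z K1 K2 ε s
    hθ0 hr0 hφr hZ1 hZlog hK1 hK10 hε hεZ hεK1 hs
  have hW := W_bound α hα φ hφmono hφrange hψ1 hψ21 θ r Z K1 K2 ε s
    hθ0 hr0 hφr hZ1 hZlog hK1 hK2 hK10 hK20 hε hεZ hεK1 hεK2 hs
  exact final_est (Ff φ ε s) (Wf φ ε s) δ θ hθ0 hθhalf hθδ hF1 hF2 hW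
end

section
/- For any α ≥ 0 and κ ∈ (0,1), there exist s_α ≥ 1 and a C² nondecreasing function u_α : ℝ₊* → ℝ with u_α(s) = ln s for 0 < s ≤ 1, u_α(s) = ln s + α ln ln s for s ≥ s_α, and -(2u_α'(s) + s u_α''(s))/(s² u_α'(s)³) ≤ -κ² for all s > 0. -/
open Set Real Topology Filter

noncomputable def cl (x : ℝ) : ℝ := max 0 (min 1 x)

lemma cl_of_nonpos {x : ℝ} (h : x ≤ 0) : cl x = 0 := by
  have : min 1 x = x := min_eq_right (h.trans zero_le_one)
  simp [cl, this, max_eq_left h]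

lemma cl_of_ge {x : ℝ} (h : 1 ≤ x) : cl x = 1 := by
  simp [cl, min_eq_left h]

lemma cl_of_mem {x : ℝ} (h0 : 0 ≤ x) (h1 : x ≤ 1) : cl x = x := by
  simp [cl, min_eq_right h1, max_eq_right h0]

lemma cl_nonneg (x : ℝ) : 0 ≤ cl x := le_max_left _ _

lemma cl_le_one (x : ℝ) : cl x ≤ 1 := by
  rcases le_total x 0 with h | h
  · rw [cl_of_nonpos h]; norm_num
  · exact max_le zero_le_one (min_le_left _ _)

noncomputable def chi (x : ℝ) : ℝ := (cl x)^3*(10 - 15*(cl x) + 6*(cl x)^2)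
noncomputable def chid (x : ℝ) : ℝ := 30*(cl x)^2*(1-(cl x))^2
noncomputable def chidd (x : ℝ) : ℝ := 60*(cl x)*(1-(cl x))*(1-2*(cl x))

lemma chi_of_nonpos {x : ℝ} (h : x ≤ 0) : chi x = 0 := by simp [chi, cl_of_nonpos h]
lemma chi_of_ge {x : ℝ} (h : 1 ≤ x) : chi x = 1 := by simp [chi, cl_of_ge h]; norm_num
lemma chid_of_nonpos {x : ℝ} (h : x ≤ 0) : chid x = 0 := by simp [chid, cl_of_nonpos h]
lemma chid_of_ge {x : ℝ} (h : 1 ≤ x) : chid x = 0 := by simp [chid, cl_of_ge h]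
lemma chidd_of_nonpos {x : ℝ} (h : x ≤ 0) : chidd x = 0 := by simp [chidd, cl_of_nonpos h]
lemma chidd_of_ge {x : ℝ} (h : 1 ≤ x) : chidd x = 0 := by simp [chidd, cl_of_ge h]

lemma chi_nonneg (x : ℝ) : 0 ≤ chi x := by
  have h0 := cl_nonneg x
  have hq : 0 ≤ 10 - 15*(cl x) + 6*(cl x)^2 := by nlinarith [sq_nonneg (cl x - 5/4)]
  exact mul_nonneg (pow_nonneg h0 3) hq
lemma chi_le_one (x : ℝ) : chi x ≤ 1 := by
  have h0 := cl_nonneg x; have h1 := cl_le_one x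
  unfold chi; nlinarith [pow_nonneg (sub_nonneg.2 h1) 3, sq_nonneg (cl x), mul_nonneg h0 h0]
lemma chid_nonneg (x : ℝ) : 0 ≤ chid x := by
  unfold chid; positivity
lemma chid_le_two (x : ℝ) : chid x ≤ 2 := by
  have h0 := cl_nonneg x; have h1 := cl_le_one x
  have ha : cl x * (1 - cl x) ≤ 1/4 := by nlinarith [sq_nonneg (2*cl x - 1)]
  have ha0 : 0 ≤ cl x * (1 - cl x) := mul_nonneg h0 (by linarith)
  unfold chid; nlinarith [mul_le_mul ha ha ha0 (by norm_num : (0:ℝ) ≤ 1/4)]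
lemma chidd_le (x : ℝ) : chidd x ≤ 15 := by
  have h0 := cl_nonneg x; have h1 := cl_le_one x
  have ha : cl x * (1 - cl x) ≤ 1/4 := by nlinarith [sq_nonneg (2*cl x - 1)]
  have ha0 : 0 ≤ cl x * (1 - cl x) := mul_nonneg h0 (by linarith)
  unfold chidd
  nlinarith [mul_nonneg ha0 (by linarith : (0:ℝ) ≤ 1 - (1 - 2*cl x)),
    mul_nonneg (by linarith : (0:ℝ) ≤ 1/4 - cl x * (1 - cl x)) (by linarith : (0:ℝ) ≤ 1 + (1 - 2*cl x))]
lemma chidd_ge (x : ℝ) : -15 ≤ chidd x := by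
  have h0 := cl_nonneg x; have h1 := cl_le_one x
  have ha : cl x * (1 - cl x) ≤ 1/4 := by nlinarith [sq_nonneg (2*cl x - 1)]
  have ha0 : 0 ≤ cl x * (1 - cl x) := mul_nonneg h0 (by linarith)
  unfold chidd
  nlinarith [mul_nonneg ha0 (by linarith : (0:ℝ) ≤ 1 + (1 - 2*cl x)),
    mul_nonneg (by linarith : (0:ℝ) ≤ 1/4 - cl x * (1 - cl x)) (by linarith : (0:ℝ) ≤ 1 - (1 - 2*cl x))]

lemma P_hasDeriv (x : ℝ) :
    HasDerivAt (fun y : ℝ => y^3*(10 - 15*y + 6*y^2)) (30*x^2*(1-x)^2) x := by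
  have h := (hasDerivAt_pow 3 x).mul
      (((hasDerivAt_const x (10:ℝ)).sub ((hasDerivAt_id x).const_mul 15)).add
        ((hasDerivAt_pow 2 x).const_mul 6))
  convert h using 1
  · rfl
  · rfl
  · funext y; simp
  · simp; ring
lemma Q_hasDeriv (x : ℝ) :
    HasDerivAt (fun y : ℝ => 30*y^2*(1-y)^2) (60*x*(1-x)*(1-2*x)) x := by
  have h := (((hasDerivAt_pow 2 x).mul
      (((hasDerivAt_const x (1:ℝ)).sub (hasDerivAt_id x)).pow 2)).const_mul 30)
  convert h using 1
  · rfl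
  · rfl
  · funext y; simp; ring
  · simp; ring

lemma glue3 (f P Pd D : ℝ → ℝ)
    (hP : ∀ x, HasDerivAt P (Pd x) x)
    (h0 : ∀ y : ℝ, y ≤ 0 → f y = P 0) (h1 : ∀ y : ℝ, 1 ≤ y → f y = P 1)
    (hm : ∀ y ∈ Icc (0:ℝ) 1, f y = P y)
    (hD0 : ∀ y : ℝ, y ≤ 0 → D y = 0) (hD1 : ∀ y : ℝ, 1 ≤ y → D y = 0)
    (hDm : ∀ y ∈ Icc (0:ℝ) 1, D y = Pd y)
    (hPd0 : Pd 0 = 0) (hPd1 : Pd 1 = 0) :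
    ∀ x, HasDerivAt f (D x) x := by
  intro x
  rcases lt_or_ge x 0 with hx | hx
  · rw [hD0 x hx.le]
    exact (hasDerivAt_const x (P 0)).congr_of_eventuallyEq
      (Filter.eventuallyEq_of_mem (Iio_mem_nhds hx) fun y hy => h0 y (le_of_lt hy))
  rcases lt_or_ge 1 x with hx1 | hx1
  · rw [hD1 x hx1.le]
    exact (hasDerivAt_const x (P 1)).congr_of_eventuallyEq
      (Filter.eventuallyEq_of_mem (Ioi_mem_nhds hx1) fun y hy => h1 y (le_of_lt hy))
  rcases eq_or_lt_of_le hx with hx0 | hx0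
  · -- x = 0
    subst hx0
    rw [hDm 0 ⟨le_rfl, zero_le_one⟩, hPd0]
    have hl : HasDerivWithinAt f 0 (Iic 0) 0 :=
      ((hasDerivAt_const (0:ℝ) (P 0)).hasDerivWithinAt).congr
        (fun y hy => h0 y hy) (h0 0 le_rfl)
    have hr0 : HasDerivWithinAt f 0 (Icc 0 1) 0 := by
      have h' := (hP 0).hasDerivWithinAt (s := Icc (0:ℝ) 1)
      rw [hPd0] at h'
      exact h'.congr (fun y hy => hm y hy) (hm 0 ⟨le_rfl, zero_le_one⟩)
    have hmem : Icc (0:ℝ) 1 ∈ 𝓝[Ici 0] (0:ℝ) := by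
      have := inter_mem_nhdsWithin (Ici (0:ℝ)) (Iic_mem_nhds (α := ℝ) one_pos)
      rwa [Ici_inter_Iic] at this
    have hr : HasDerivWithinAt f 0 (Ici 0) 0 := hr0.mono_of_mem_nhdsWithin hmem
    have h := hl.union hr
    rw [Iic_union_Ici] at h
    exact hasDerivWithinAt_univ.1 h
  rcases eq_or_lt_of_le hx1 with hx1' | hx1'
  · -- x = 1
    subst hx1'
    rw [hDm 1 ⟨zero_le_one, le_rfl⟩, hPd1]
    have hl0 : HasDerivWithinAt f 0 (Icc 0 1) 1 := by
      have h' := (hP 1).hasDerivWithinAt (s := Icc (0:ℝ) 1)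
      rw [hPd1] at h'
      exact h'.congr (fun y hy => hm y hy) (hm 1 ⟨zero_le_one, le_rfl⟩)
    have hmem : Icc (0:ℝ) 1 ∈ 𝓝[Iic 1] (1:ℝ) := by
      have := inter_mem_nhdsWithin (Iic (1:ℝ)) (Ici_mem_nhds (α := ℝ) one_pos)
      rwa [Iic_inter_Ici] at this
    have hl : HasDerivWithinAt f 0 (Iic 1) 1 := hl0.mono_of_mem_nhdsWithin hmem
    have hr : HasDerivWithinAt f 0 (Ici 1) 1 :=
      ((hasDerivAt_const (1:ℝ) (P 1)).hasDerivWithinAt).congr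
        (fun y hy => h1 y hy) (h1 1 le_rfl)
    have h := hl.union hr
    rw [Iic_union_Ici] at h
    exact hasDerivWithinAt_univ.1 h
  · rw [hDm x ⟨hx, hx1⟩]
    exact (hP x).congr_of_eventuallyEq
      (Filter.eventuallyEq_of_mem (Ioo_mem_nhds hx0 hx1') fun y hy => hm y ⟨hy.1.le, hy.2.le⟩)

lemma chi_hasDeriv (x : ℝ) : HasDerivAt chi (chid x) x := by
  refine glue3 chi (fun y : ℝ => y^3*(10 - 15*y + 6*y^2)) (fun y : ℝ => 30*y^2*(1-y)^2)
    chid P_hasDeriv ?_ ?_ ?_ ?_ ?_ ?_ (by norm_num) (by norm_num) x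
  · intro y hy; rw [chi_of_nonpos hy]; norm_num
  · intro y hy; rw [chi_of_ge hy]; norm_num
  · intro y hy; simp only [chi, cl_of_mem hy.1 hy.2]
  · intro y hy; exact chid_of_nonpos hy
  · intro y hy; exact chid_of_ge hy
  · intro y hy; simp only [chid, cl_of_mem hy.1 hy.2]

lemma chid_hasDeriv (x : ℝ) : HasDerivAt chid (chidd x) x := by
  refine glue3 chid (fun y : ℝ => 30*y^2*(1-y)^2) (fun y : ℝ => 60*y*(1-y)*(1-2*y))
    chidd Q_hasDeriv ?_ ?_ ?_ ?_ ?_ ?_ (by norm_num) (by norm_num) x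
  · intro y hy; rw [chid_of_nonpos hy]; norm_num
  · intro y hy; rw [chid_of_ge hy]; norm_num
  · intro y hy; simp only [chid, cl_of_mem hy.1 hy.2]
  · intro y hy; exact chidd_of_nonpos hy
  · intro y hy; exact chidd_of_ge hy
  · intro y hy; simp only [chidd, cl_of_mem hy.1 hy.2]

lemma chidd_continuous : Continuous chidd := by
  have hcl : Continuous cl := continuous_const.max (continuous_const.min continuous_id)
  unfold chidd
  fun_prop

lemma chi_contDiff : ContDiff ℝ 2 chi := by
  have hdchi : deriv chi = chid := funext fun x => (chi_hasDeriv x).deriv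
  have hdchid : deriv chid = chidd := funext fun x => (chid_hasDeriv x).deriv
  rw [show (2 : WithTop ℕ∞) = 1 + 1 by norm_num, contDiff_succ_iff_deriv]
  refine ⟨fun x => (chi_hasDeriv x).differentiableAt, by simp, ?_⟩
  rw [hdchi, contDiff_one_iff_deriv, hdchid]
  exact ⟨fun x => (chid_hasDeriv x).differentiableAt, chidd_continuous⟩

noncomputable def gfun (α T t : ℝ) : ℝ :=
  1 + α*(chid ((t-T)/T)/T * Real.log t + chi ((t-T)/T) * t⁻¹)
noncomputable def g2fun (α T t : ℝ) : ℝ :=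
  α*(chidd ((t-T)/T)/T^2 * Real.log t + 2*(chid ((t-T)/T)/T) * t⁻¹ - chi ((t-T)/T) * (t^2)⁻¹)
noncomputable def ufun (α T s : ℝ) : ℝ :=
  Real.log s + α * (chi ((Real.log s - T)/T) * Real.log (Real.log s))
noncomputable def vfun (α T s : ℝ) : ℝ := gfun α T (Real.log s) * s⁻¹

lemma arg_nonpos {T t : ℝ} (hT : 0 < T) (ht : t ≤ T) : (t - T)/T ≤ 0 :=
  div_nonpos_of_nonpos_of_nonneg (sub_nonpos.2 ht) hT.le

lemma arg_ge_one {T t : ℝ} (hT : 0 < T) (ht : 2*T ≤ t) : 1 ≤ (t - T)/T :=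
  (le_div_iff₀ hT).2 (by linarith)

lemma gfun_eq_one {α T t : ℝ} (hT : 0 < T) (ht : t ≤ T) : gfun α T t = 1 := by
  rw [gfun, chi_of_nonpos (arg_nonpos hT ht), chid_of_nonpos (arg_nonpos hT ht)]; ring

lemma g2fun_eq_zero {α T t : ℝ} (hT : 0 < T) (ht : t ≤ T) : g2fun α T t = 0 := by
  rw [g2fun, chi_of_nonpos (arg_nonpos hT ht), chid_of_nonpos (arg_nonpos hT ht),
    chidd_of_nonpos (arg_nonpos hT ht)]; ring

lemma ufun_eq_log {α T s : ℝ} (hT : 0 < T) (hs : Real.log s ≤ T) : ufun α T s = Real.log s := by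
  rw [ufun, chi_of_nonpos (arg_nonpos hT hs)]; ring

lemma hasDerivAt_gfun {α T t : ℝ} (hT : 0 < T) (ht : 0 < t) :
    HasDerivAt (gfun α T) (g2fun α T t) t := by
  have hinner : HasDerivAt (fun y : ℝ => (y - T)/T) (1/T) t := by
    simpa using ((hasDerivAt_id t).sub_const T).div_const T
  have hchi := (chi_hasDeriv ((t-T)/T)).comp t hinner
  have hchid := (chid_hasDeriv ((t-T)/T)).comp t hinner
  have hlogt := Real.hasDerivAt_log ht.ne'
  have hinv := hasDerivAt_inv ht.ne'
  have h1 := (hchid.div_const T).mul hlogt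
  have h2 := hchi.mul hinv
  have h := ((h1.add h2).const_mul α).const_add 1
  convert h using 1
  · rfl
  · rfl
  · rfl
  simp only [Function.comp_apply]
  rw [g2fun]; ring

lemma hasDerivAt_ufun {α T : ℝ} (hT : 2 ≤ T) {s : ℝ} (hs : 0 < s) :
    HasDerivAt (ufun α T) (vfun α T s) s := by
  have hT0 : (0:ℝ) < T := by linarith
  rcases lt_or_ge s (Real.exp T) with hlt | hge
  · have hv : vfun α T s = s⁻¹ := by
      rw [vfun, gfun_eq_one hT0 (by
        rcases le_total s 1 with h1 | h1
        · exact le_trans (Real.log_nonpos (le_of_lt hs) h1) (by linarith)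
        · exact le_of_lt ((Real.log_lt_iff_lt_exp hs).2 hlt)), one_mul]
    rw [hv]
    have hlog : HasDerivAt Real.log s⁻¹ s := Real.hasDerivAt_log hs.ne'
    apply hlog.congr_of_eventuallyEq
    filter_upwards [Ioo_mem_nhds hs hlt] with y hy
    exact ufun_eq_log hT0 (by
      rcases le_total y 1 with h1 | h1
      · exact le_trans (Real.log_nonpos (le_of_lt hy.1) h1) (by linarith)
      · exact le_of_lt ((Real.log_lt_iff_lt_exp hy.1).2 hy.2))
  · -- s ≥ exp T : use chain rule
    have hlogs : HasDerivAt Real.log s⁻¹ s := Real.hasDerivAt_log hs.ne'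
    have ht0 : 0 < Real.log s := by
      have : Real.log (Real.exp T) ≤ Real.log s := Real.log_le_log (Real.exp_pos T) hge
      rw [Real.log_exp] at this; linarith
    have hinner : HasDerivAt (fun y : ℝ => (y - T)/T) (1/T) (Real.log s) := by
      simpa using ((hasDerivAt_id (Real.log s)).sub_const T).div_const T
    have hchi := (chi_hasDeriv ((Real.log s - T)/T)).comp (Real.log s) hinner
    have hlogt := Real.hasDerivAt_log ht0.ne'
    have hG := (hasDerivAt_id (Real.log s)).add ((hchi.mul hlogt).const_mul α)
    have h := hG.comp s hlogs
    convert h using 1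
    · rfl
    · rfl
    · rfl
    simp only [Function.comp_apply, id_eq]
    rw [vfun, gfun]; ring

lemma hasDerivAt_vfun {α T : ℝ} (hT : 2 ≤ T) {s : ℝ} (hs : 0 < s) :
    HasDerivAt (vfun α T)
      ((g2fun α T (Real.log s) - gfun α T (Real.log s)) * (s^2)⁻¹) s := by
  have hT0 : (0:ℝ) < T := by linarith
  rcases lt_or_ge s (Real.exp T) with hlt | hge
  · have hlog_le : ∀ y : ℝ, 0 < y → y < Real.exp T → Real.log y ≤ T := by
      intro y hy hyl
      rcases le_total y 1 with h1 | h1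
      · exact le_trans (Real.log_nonpos (le_of_lt hy) h1) (by linarith)
      · exact le_of_lt ((Real.log_lt_iff_lt_exp hy).2 hyl)
    have hval : (g2fun α T (Real.log s) - gfun α T (Real.log s)) * (s^2)⁻¹ = -(s^2)⁻¹ := by
      rw [gfun_eq_one hT0 (hlog_le s hs hlt), g2fun_eq_zero hT0 (hlog_le s hs hlt)]; ring
    rw [hval]
    apply (hasDerivAt_inv hs.ne').congr_of_eventuallyEq
    filter_upwards [Ioo_mem_nhds hs hlt] with y hy
    rw [vfun, gfun_eq_one hT0 (hlog_le y hy.1 hy.2), one_mul]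
  · have hlogs : HasDerivAt Real.log s⁻¹ s := Real.hasDerivAt_log hs.ne'
    have ht0 : 0 < Real.log s := by
      have : Real.log (Real.exp T) ≤ Real.log s := Real.log_le_log (Real.exp_pos T) hge
      rw [Real.log_exp] at this; linarith
    have hg := (hasDerivAt_gfun (α := α) hT0 ht0).comp s hlogs
    have h := hg.mul (hasDerivAt_inv hs.ne')
    convert h using 1
    · rfl
    · rfl
    · rfl
    simp only [Function.comp_apply]
    ring

set_option maxHeartbeats 1000000 in
lemma g_bounds {α M δ T : ℝ} (hα : 0 ≤ α) (hM : 1 ≤ M) (hδ : 0 ≤ δ) (hT : 2 ≤ T)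
    (hC1 : 7*α ≤ Real.sqrt T * (M-1)) (hC2 : 46*α ≤ T*δ) (t : ℝ) :
    1 ≤ gfun α T t ∧ gfun α T t ≤ M ∧ -δ ≤ g2fun α T t := by
  have hT0 : (0:ℝ) < T := by linarith
  set st := Real.sqrt T with hstdef
  have hst2 : st * st = T := Real.mul_self_sqrt hT0.le
  have hst0 : 0 < st := Real.sqrt_pos.2 hT0
  have hst1 : 1 ≤ st := by nlinarith
  have hstT : st ≤ T := by nlinarith
  clear_value st
  rcases le_or_gt t T with h | h
  · rw [gfun_eq_one hT0 h, g2fun_eq_zero hT0 h]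
    exact ⟨le_rfl, hM, by linarith⟩
  have ht0 : (0:ℝ) < t := by linarith
  have hL0 : 0 ≤ Real.log t := Real.log_nonneg (by linarith)
  have htinv : t⁻¹ ≤ T⁻¹ := by
    apply inv_anti₀ hT0 h.le
  have ht2inv : (t^2)⁻¹ ≤ T⁻¹ := by
    apply inv_anti₀ hT0; nlinarith
  rcases le_or_gt t (2*T) with h2 | h2
  · -- middle region
    have hLub : Real.log t ≤ 3*st := by
      have l1 : Real.log t ≤ Real.log (2*T) := Real.log_le_log ht0 (by linarith)
      have l2 : Real.log (2*T) = Real.log 2 + Real.log T :=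
        Real.log_mul (by norm_num) hT0.ne'
      have l3 : Real.log 2 ≤ 1 := by
        have := Real.log_le_sub_one_of_pos (show (0:ℝ) < 2 by norm_num); linarith
      have l4 : Real.log T = 2 * Real.log st := by
        rw [hstdef, Real.log_sqrt hT0.le]; ring
      have l5 : Real.log st ≤ st - 1 := by
        have := Real.log_le_sub_one_of_pos hst0; linarith
      linarith
    set A := chid ((t-T)/T) with hA
    set B := chi ((t-T)/T) with hB
    set C := chidd ((t-T)/T) with hC
    clear_value A B C
    have hA0 : 0 ≤ A := hA ▸ chid_nonneg _
    have hA2 : A ≤ 2 := hA ▸ chid_le_two _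
    have hB0 : 0 ≤ B := hB ▸ chi_nonneg _
    have hB1 : B ≤ 1 := hB ▸ chi_le_one _
    have hCl : -15 ≤ C := hC ▸ chidd_ge _
    have hCu : C ≤ 15 := hC ▸ chidd_le _
    have hti0 : 0 ≤ t⁻¹ := inv_nonneg.2 ht0.le
    have htsti : t⁻¹ ≤ st⁻¹ := inv_anti₀ hst0 (by linarith)
    -- bound g - 1
    have e1 : A/T*Real.log t ≤ 6/st := by
      have e1a : A/T*Real.log t ≤ (2/T)*(3*st) :=
        mul_le_mul ((div_le_div_iff_of_pos_right hT0).2 hA2) hLub hL0 (by positivity)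
      have e1b : (2/T)*(3*st) = 6/st := by
        rw [← hst2]; field_simp; ring
      linarith
    have e2 : B*t⁻¹ ≤ 1/st := by
      have := mul_le_mul hB1 htsti hti0 zero_le_one
      rw [one_mul] at this
      rw [one_div]; exact this
    have e0 : 0 ≤ A/T*Real.log t + B*t⁻¹ :=
      add_nonneg (mul_nonneg (div_nonneg hA0 hT0.le) hL0) (mul_nonneg hB0 hti0)
    have hg1 : 1 ≤ gfun α T t := by
      rw [gfun, ← hA, ← hB]
      have := mul_nonneg hα e0
      linarith
    have hgM : gfun α T t ≤ M := by
      have c1 : α*(A/T*Real.log t + B*t⁻¹) ≤ α*(6/st + 1/st) :=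
        mul_le_mul_of_nonneg_left (by linarith) hα
      have c2 : α*(6/st + 1/st) = 7*α/st := by ring
      have c3 : 7*α/st ≤ M - 1 := by
        rw [div_le_iff₀ hst0]; nlinarith
      rw [gfun, ← hA, ← hB]; linarith
    refine ⟨hg1, hgM, ?_⟩
    -- bound g2
    have f1 : -(45*T⁻¹) ≤ C/T^2*Real.log t := by
      have f1a : (-15/T^2)*Real.log t ≤ C/T^2*Real.log t :=
        mul_le_mul_of_nonneg_right ((div_le_div_iff_of_pos_right (by positivity)).2 hCl) hL0
      have f1b : (-15/T^2)*(3*st) ≤ (-15/T^2)*Real.log t := by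
        apply mul_le_mul_of_nonpos_left hLub
        apply div_nonpos_of_nonpos_of_nonneg (by norm_num) (by positivity)
      have f1c : -(45*T⁻¹) ≤ (-15/T^2)*(3*st) := by
        have heq : (-15/T^2)*(3*st) = -(45*st/T^2) := by ring
        have he2 : (45:ℝ)*T⁻¹ = 45/T := by ring
        rw [heq, he2, neg_le_neg_iff, div_le_div_iff₀ (by positivity) hT0]
        nlinarith
      linarith
    have f2 : (0:ℝ) ≤ 2*(A/T)*t⁻¹ := by positivity
    have f3 : B*(t^2)⁻¹ ≤ T⁻¹ := by
      have : B*(t^2)⁻¹ ≤ 1*(t^2)⁻¹ := mul_le_mul_of_nonneg_right hB1 (by positivity)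
      rw [one_mul] at this
      linarith
    have finner : -(46*T⁻¹) ≤ C/T^2*Real.log t + 2*(A/T)*t⁻¹ - B*(t^2)⁻¹ := by linarith
    have ftot : α*(-(46*T⁻¹)) ≤ α*(C/T^2*Real.log t + 2*(A/T)*t⁻¹ - B*(t^2)⁻¹) :=
      mul_le_mul_of_nonneg_left finner hα
    have fdelta : α*(46*T⁻¹) ≤ δ := by
      rw [show α*(46*T⁻¹) = 46*α/T by ring, div_le_iff₀ hT0]
      linarith
    rw [g2fun, ← hA, ← hB, ← hC]
    linarith
  · -- tail region
    have hone : (1:ℝ) ≤ (t - T)/T := arg_ge_one hT0 h2.le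
    have hg_eq : gfun α T t = 1 + α*t⁻¹ := by
      rw [gfun, chi_of_ge hone, chid_of_ge hone]; ring
    have hg2_eq : g2fun α T t = -(α*(t^2)⁻¹) := by
      rw [g2fun, chi_of_ge hone, chid_of_ge hone, chidd_of_ge hone]; ring
    have hti0 : 0 ≤ t⁻¹ := inv_nonneg.2 ht0.le
    have hTM : 7*α ≤ T*(M-1) := by
      nlinarith [mul_nonneg (sub_nonneg.2 hst1) (mul_nonneg hst0.le (by linarith : (0:ℝ) ≤ M - 1))]
    refine ⟨by rw [hg_eq]; nlinarith, ?_, ?_⟩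
    · rw [hg_eq]
      have : α*t⁻¹ ≤ α*T⁻¹ := mul_le_mul_of_nonneg_left htinv hα
      have hAT : α*T⁻¹ ≤ M - 1 := by
        rw [← one_div, mul_one_div, div_le_iff₀ hT0]; nlinarith
      linarith
    · rw [hg2_eq]
      have : α*(t^2)⁻¹ ≤ α*T⁻¹ := mul_le_mul_of_nonneg_left ht2inv hα
      have hAT : α*T⁻¹ ≤ δ := by
        rw [← one_div, mul_one_div, div_le_iff₀ hT0]; nlinarith
      linarith

lemma log_le_of_lt_exp {T y : ℝ} (hT : 0 ≤ T) (hy : 0 < y) (hyl : y < Real.exp T) :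
    Real.log y ≤ T := by
  rcases le_total y 1 with h1 | h1
  · exact le_trans (Real.log_nonpos hy.le h1) hT
  · exact le_of_lt ((Real.log_lt_iff_lt_exp hy).2 hyl)

set_option maxHeartbeats 1000000 in
/-- For any `α ≥ 0` and `κ ∈ (0,1)` there exist `s_α ≥ 1` and a C² nondecreasing
function `u_α` on `(0,∞)` with `u_α(s) = ln s` for `0 < s ≤ 1`,
`u_α(s) = ln s + α ln ln s` for `s ≥ s_α`, and curvature
`-(2u_α'(s)+su_α''(s))/(s²u_α'(s)³) ≤ -κ²` for all `s > 0`. -/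
theorem stmt_8 (α κ : ℝ) (hα : 0 ≤ α) (hκ : κ ∈ Set.Ioo (0 : ℝ) 1) :
    ∃ sα : ℝ, 1 ≤ sα ∧ ∃ u : ℝ → ℝ,
      ContDiffOn ℝ 2 u (Set.Ioi 0) ∧ MonotoneOn u (Set.Ioi 0) ∧
      (∀ s : ℝ, 0 < s → s ≤ 1 → u s = Real.log s) ∧
      (∀ s : ℝ, sα ≤ s → u s = Real.log s + α * Real.log (Real.log s)) ∧
      (∀ s : ℝ, 0 < s →
        -(2 * deriv u s + s * deriv (deriv u) s) / (s ^ 2 * deriv u s ^ 3) ≤ -κ ^ 2) := by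
  obtain ⟨hκ0, hκ1⟩ := hκ
  set M : ℝ := (1 + κ⁻¹)/2 with hMdef
  have hκinv : 1 < κ⁻¹ := (one_lt_inv₀ hκ0).2 hκ1
  have hM1 : 1 < M := by rw [hMdef]; linarith
  set δ : ℝ := 1 - κ^2*M^2 with hδdef
  have hκM : κ*M = (κ+1)/2 := by
    rw [hMdef]; field_simp
  have hδ0 : 0 < δ := by
    have h1 : κ^2*M^2 = (κ*M)^2 := by ring
    rw [hδdef, h1, hκM]; nlinarith
  clear_value M δ
  set T : ℝ := 2 + 49*α^2/(M-1)^2 + 46*α/δ with hTdef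
  have hMm : 0 < M - 1 := by linarith
  have ht1 : 0 ≤ 49*α^2/(M-1)^2 := by positivity
  have ht2 : 0 ≤ 46*α/δ := by positivity
  have hT2 : 2 ≤ T := by rw [hTdef]; linarith
  have hT0 : 0 < T := by linarith
  have hC1 : 7*α ≤ Real.sqrt T * (M-1) := by
    have h1 : (7*α/(M-1))^2 ≤ T := by
      rw [hTdef, div_pow]
      have h2 : (7*α)^2 = 49*α^2 := by ring
      rw [h2]; linarith
    have h2 : 7*α/(M-1) ≤ Real.sqrt T := by
      calc 7*α/(M-1) = Real.sqrt ((7*α/(M-1))^2) := (Real.sqrt_sq (by positivity)).symm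
        _ ≤ Real.sqrt T := Real.sqrt_le_sqrt h1
    calc 7*α = (7*α/(M-1))*(M-1) := by field_simp
      _ ≤ Real.sqrt T * (M-1) := mul_le_mul_of_nonneg_right h2 hMm.le
  have hC2 : 46*α ≤ T*δ := by
    have h1 : 46*α/δ ≤ T := by rw [hTdef]; linarith
    calc 46*α = (46*α/δ)*δ := by field_simp
      _ ≤ T*δ := mul_le_mul_of_nonneg_right h1 hδ0.le
  clear_value T
  have hgb := g_bounds hα hM1.le hδ0.le hT2 hC1 hC2
  have hkey : ∀ t : ℝ, κ^2 * (gfun α T t)^3 ≤ gfun α T t + g2fun α T t := by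
    intro t
    obtain ⟨h1, h2, h3⟩ := hgb t
    have hδeq : κ^2*M^2 = 1 - δ := by rw [hδdef]; ring
    nlinarith [mul_nonneg (mul_nonneg (sq_nonneg κ) (by linarith : (0:ℝ) ≤ gfun α T t))
        (mul_nonneg (by linarith : (0:ℝ) ≤ M - gfun α T t)
          (by linarith : (0:ℝ) ≤ M + gfun α T t)),
      mul_nonneg hδ0.le (by linarith : (0:ℝ) ≤ gfun α T t - 1)]
  have hcd : ContDiffOn ℝ 2 (ufun α T) (Set.Ioi 0) := by
    intro s hs
    rw [Set.mem_Ioi] at hs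
    apply ContDiffAt.contDiffWithinAt
    rcases lt_or_ge s (Real.exp T) with hlt | hge
    · apply (Real.contDiffAt_log.2 hs.ne').congr_of_eventuallyEq
      filter_upwards [Ioo_mem_nhds hs hlt] with y hy
      exact ufun_eq_log hT0 (log_le_of_lt_exp hT0.le hy.1 hy.2)
    · have hlogpos : 0 < Real.log s := by
        have h := Real.log_le_log (Real.exp_pos T) hge
        rw [Real.log_exp] at h; linarith
      have hlog : ContDiffAt ℝ 2 Real.log s := Real.contDiffAt_log.2 hs.ne'
      have hll : ContDiffAt ℝ 2 (fun y => Real.log (Real.log y)) s :=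
        (Real.contDiffAt_log.2 hlogpos.ne').comp s hlog
      have hchia : ContDiffAt ℝ 2 (fun y => chi ((Real.log y - T)/T)) s :=
        (chi_contDiff.contDiffAt).comp s ((hlog.sub contDiffAt_const).div_const T)
      exact hlog.add (contDiffAt_const.mul (hchia.mul hll))
  have hmono : MonotoneOn (ufun α T) (Set.Ioi 0) := by
    apply (strictMonoOn_of_deriv_pos (convex_Ioi 0) hcd.continuousOn ?_).monotoneOn
    intro x hx
    rw [interior_Ioi, Set.mem_Ioi] at hx
    rw [(hasDerivAt_ufun hT2 hx).deriv, vfun]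
    have h1 := (hgb (Real.log x)).1
    have : 0 < x⁻¹ := inv_pos.2 hx
    nlinarith
  refine ⟨Real.exp (2*T), Real.one_le_exp (by linarith), ufun α T, hcd, hmono, ?_, ?_, ?_⟩
  · intro s hs hs1
    exact ufun_eq_log hT0 (le_trans (Real.log_nonpos hs.le hs1) hT0.le)
  · intro s hsα
    have hs0 : 0 < s := lt_of_lt_of_le (Real.exp_pos _) hsα
    have hlog2T : 2*T ≤ Real.log s := by
      have h := Real.log_le_log (Real.exp_pos _) hsα
      rwa [Real.log_exp] at h
    rw [ufun, chi_of_ge (arg_ge_one hT0 hlog2T)]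
    ring
  · intro s hs
    have hd1 : deriv (ufun α T) s = gfun α T (Real.log s) * s⁻¹ :=
      (hasDerivAt_ufun hT2 hs).deriv
    have hev : (deriv (ufun α T)) =ᶠ[𝓝 s] vfun α T := by
      filter_upwards [Ioi_mem_nhds hs] with y hy
      exact (hasDerivAt_ufun hT2 hy).deriv
    have hd2 : deriv (deriv (ufun α T)) s
        = (g2fun α T (Real.log s) - gfun α T (Real.log s)) * (s^2)⁻¹ := by
      rw [hev.deriv_eq, (hasDerivAt_vfun hT2 hs).deriv]
    rw [hd1, hd2]
    set a := gfun α T (Real.log s) with ha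
    set b := g2fun α T (Real.log s) with hb
    have ha1 : 1 ≤ a := (hgb _).1
    have hk := hkey (Real.log s)
    rw [← ha, ← hb] at hk
    have ha0 : 0 < a := by linarith
    have hpos1 : 0 < s^2*(a*s⁻¹)^3 :=
      mul_pos (pow_pos hs 2) (pow_pos (mul_pos ha0 (inv_pos.2 hs)) 3)
    have hpos2 : (0:ℝ) < a^3 := pow_pos ha0 3
    have hE : (2*(a*s⁻¹) + s*((b - a)*(s^2)⁻¹)) / (s^2*(a*s⁻¹)^3) = (a+b)/a^3 := by
      rw [div_eq_div_iff hpos1.ne.symm hpos2.ne.symm]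
      field_simp
      ring
    rw [neg_div, hE, neg_le_neg_iff, le_div_iff₀ hpos2]
    linarith
end
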